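/- The quantum W1 distance is additive with respect to the tensor product: for any quantum states ρ', σ' ∈ S_m and ρ'', σ'' ∈ S_n, one has ‖ρ' ⊗ ρ'' − σ' ⊗ σ''‖_{W1} = ‖ρ' − σ'‖_{W1} + ‖ρ'' − σ''‖_{W1}. -/

import Mathlib

open scoped BigOperators
open scoped Classical
open scoped ComplexOrder

noncomputable section

namespace QW1

/-- Configurations of `n` qudits of local dimension `d`:
the index set of the canonical basis of `(ℂ^d)^{⊗ n}`. -/
abbrev Cfg (d n : ℕ) : Type := Fin n → Fin d

/-- Linear operators on the Hilbert space of `n` qudits, represented as matrices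
in the canonical basis. -/
abbrev Mat (d n : ℕ) : Type := Matrix (Cfg d n) (Cfg d n) ℂ

/-- The trace norm `‖A‖₁ = Tr √(Aᴴ A)`. -/
noncomputable def traceNorm {ι : Type} [Fintype ι] [DecidableEq ι] (A : Matrix ι ι ℂ) : ℝ :=
  (((Matrix.posSemidef_conjTranspose_mul_self A).1.eigenvectorUnitary : Matrix ι ι ℂ) *
      Matrix.diagonal (fun i => ((Real.sqrt ((Matrix.posSemidef_conjTranspose_mul_self A).1.eigenvalues i) : ℝ) : ℂ)) *
      (star (Matrix.posSemidef_conjTranspose_mul_self A).1.eigenvectorUnitary : Matrix ι ι ℂ)).trace.re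

/-- The operator norm `‖A‖_∞`. -/
noncomputable def opNorm {ι : Type} [Fintype ι] [DecidableEq ι] (A : Matrix ι ι ℂ) : ℝ :=
  ‖Matrix.toEuclideanCLM (𝕜 := ℂ) A‖

/-- Quantum states: positive semidefinite operators with unit trace. -/
def IsState {ι : Type} [Fintype ι] (ρ : Matrix ι ι ℂ) : Prop :=
  ρ.PosSemidef ∧ ρ.trace = 1

/-- Insert the value `s` at position `i` into a configuration `a` of the remaining qudits. -/
def ins {d n : ℕ} (i : Fin n) (a : {j : Fin n // j ≠ i} → Fin d) (s : Fin d) : Cfg d n :=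
  fun j => if h : j = i then s else a ⟨j, h⟩

/-- The partial trace over the `i`-th qudit. -/
noncomputable def ptrace {d n : ℕ} (i : Fin n) (X : Mat d n) :
    Matrix ({j : Fin n // j ≠ i} → Fin d) ({j : Fin n // j ≠ i} → Fin d) ℂ :=
  fun a b => ∑ s : Fin d, X (ins i a s) (ins i b s)

/-- The marginal of `ρ` on the `i`-th qudit (partial trace over all the other qudits). -/
noncomputable def marginal {d n : ℕ} (i : Fin n) (ρ : Mat d n) :
    Matrix (Fin d) (Fin d) ℂ :=
  fun s t => ∑ a : ({j : Fin n // j ≠ i} → Fin d), ρ (ins i a s) (ins i a t)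

/-- Combine a configuration `s` of the qudits in `I` with a configuration `a` of the rest. -/
def insSet {d n : ℕ} (I : Finset (Fin n)) (a : {j : Fin n // j ∉ I} → Fin d)
    (s : {j : Fin n // j ∈ I} → Fin d) : Cfg d n :=
  fun j => if h : j ∈ I then s ⟨j, h⟩ else a ⟨j, h⟩

/-- The partial trace over the qudits in `I`. -/
noncomputable def ptraceSet {d n : ℕ} (I : Finset (Fin n)) (X : Mat d n) :
    Matrix ({j : Fin n // j ∉ I} → Fin d) ({j : Fin n // j ∉ I} → Fin d) ℂ :=
  fun a b => ∑ s : ({j : Fin n // j ∈ I} → Fin d), X (insSet I a s) (insSet I b s)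

/-- The set of values `(1/2) ∑ i ‖X⁽ⁱ⁾‖₁` over all decompositions `X = ∑ i X⁽ⁱ⁾` with
`X⁽ⁱ⁾` self-adjoint and `Tr_i X⁽ⁱ⁾ = 0`. -/
def W1Set {d n : ℕ} (X : Mat d n) : Set ℝ :=
  { r | ∃ Y : Fin n → Mat d n, (∀ i, (Y i).IsHermitian) ∧ (∀ i, ptrace i (Y i) = 0) ∧
      X = ∑ i, Y i ∧ r = (1 / 2) * ∑ i, traceNorm (Y i) }

/-- The quantum `W₁` norm. -/
noncomputable def W1 {d n : ℕ} (X : Mat d n) : ℝ := sInf (W1Set X)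

/-- The quantum Lipschitz constant: the dual norm of the quantum `W₁` norm. -/
noncomputable def lipschitz {d n : ℕ} (H : Mat d n) : ℝ :=
  sSup { r | ∃ X : Mat d n, X.IsHermitian ∧ X.trace = 0 ∧ W1 X ≤ 1 ∧
    r = ((H * X).trace).re }

/-- Extension `Φ ⊗ id_R` of a map on matrices. -/
def extendMap {A B R : Type} [Fintype A] [Fintype B] [Fintype R]
    (Φ : Matrix A A ℂ → Matrix B B ℂ) (M : Matrix (A × R) (A × R) ℂ) :
    Matrix (B × R) (B × R) ℂ :=
  fun p q => Φ (fun a a' => M (a, p.2) (a', q.2)) p.1 q.1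

/-- Quantum channels: completely positive trace-preserving linear maps. -/
def IsCPTP {A B : Type} [Fintype A] [Fintype B]
    (Φ : Matrix A A ℂ →ₗ[ℂ] Matrix B B ℂ) : Prop :=
  (∀ (k : ℕ) (M : Matrix (A × Fin k) (A × Fin k) ℂ), M.PosSemidef →
    (extendMap (fun N => Φ N) M).PosSemidef) ∧
  ∀ M, (Φ M).trace = M.trace

/-- Action `φ_i ⊗ id` of a single-qudit map `φ` on the `i`-th qudit of `n` qudits. -/
def applyAt {d n : ℕ} (i : Fin n) (φ : Matrix (Fin d) (Fin d) ℂ → Matrix (Fin d) (Fin d) ℂ)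
    (X : Mat d n) : Mat d n :=
  fun a b => φ (fun s t => X (Function.update a i s) (Function.update b i t)) (a i) (b i)

/-- Action `φ_I ⊗ id` of a map `φ` on the qudits in `I`. -/
def applyOn {d n : ℕ} (I : Finset (Fin n))
    (φ : Matrix ({j : Fin n // j ∈ I} → Fin d) ({j : Fin n // j ∈ I} → Fin d) ℂ →
         Matrix ({j : Fin n // j ∈ I} → Fin d) ({j : Fin n // j ∈ I} → Fin d) ℂ)
    (X : Mat d n) : Mat d n :=
  fun a b =>
    φ (fun s t => X (insSet I (fun j => a j) s) (insSet I (fun j => b j) t))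
      (fun j => a j) (fun j => b j)

/-- The operator obtained from `X` by permuting the tensor factors according to `π`. -/
def permuteMat {d n : ℕ} (π : Equiv.Perm (Fin n)) (X : Mat d n) : Mat d n :=
  fun a b => X (a ∘ π) (b ∘ π)

/-- Tensor product of an operator on the first `m` qudits with one on the last `n` qudits. -/
def tensorMN {d m n : ℕ} (A : Mat d m) (B : Mat d n) : Mat d (m + n) :=
  fun a b =>
    A (fun i => a (Fin.castAdd n i)) (fun i => b (Fin.castAdd n i)) *
    B (fun j => a (Fin.natAdd m j)) (fun j => b (Fin.natAdd m j))

/-- Partial trace of an operator on `m + n` qudits over the last `n` qudits. -/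
noncomputable def ptraceLast {d m n : ℕ} (X : Mat d (m + n)) : Mat d m :=
  fun a b => ∑ k : Cfg d n, X (Fin.append a k) (Fin.append b k)

/-- Partial trace of an operator on `m + n` qudits over the first `m` qudits. -/
noncomputable def ptraceFirst {d m n : ℕ} (X : Mat d (m + n)) : Mat d n :=
  fun a b => ∑ k : Cfg d m, X (Fin.append k a) (Fin.append k b)

/-- `n`-fold tensor product `σ₁ ⊗ ⋯ ⊗ σₙ` of single-qudit operators. -/
def tensorAll {d n : ℕ} (σs : Fin n → Matrix (Fin d) (Fin d) ℂ) : Mat d n :=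
  fun a b => ∏ i, σs i (a i) (b i)

/-- `I_d^{(i)} ⊗ K`: the identity on the `i`-th qudit tensored with an operator `K`
on the remaining qudits. -/
def idTensorAt {d n : ℕ} (i : Fin n)
    (K : Matrix ({j : Fin n // j ≠ i} → Fin d) ({j : Fin n // j ≠ i} → Fin d) ℂ) :
    Mat d n :=
  fun a b => if a i = b i then K (fun j => a j) (fun j => b j) else 0

/-- `K ⊗ identity`: an operator acting only on the qudits in `I`. -/
def embedOn {d n : ℕ} (I : Finset (Fin n))
    (K : Matrix ({j : Fin n // j ∈ I} → Fin d) ({j : Fin n // j ∈ I} → Fin d) ℂ) :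
    Mat d n :=
  fun a b => if (∀ j, j ∉ I → a j = b j) then K (fun j => a j) (fun j => b j) else 0

/-- The `n`-th tensor power `φ^{⊗n}` of a single-qudit linear map `φ`. -/
noncomputable def tensorPowMap {d n : ℕ}
    (φ : Matrix (Fin d) (Fin d) ℂ → Matrix (Fin d) (Fin d) ℂ) (X : Mat d n) : Mat d n :=
  fun a b => ∑ s : Cfg d n, ∑ t : Cfg d n,
    X s t * ∏ j, φ (Matrix.single (s j) (t j) 1) (a j) (b j)

/-- The `1 → 1` norm of a map on single-qudit operators. -/
noncomputable def norm1to1 {d : ℕ}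
    (F : Matrix (Fin d) (Fin d) ℂ → Matrix (Fin d) (Fin d) ℂ) : ℝ :=
  sSup { r | ∃ ρ : Matrix (Fin d) (Fin d) ℂ, IsState ρ ∧ r = traceNorm (F ρ) }

/-- The diamond norm of a map on single-qudit operators. -/
noncomputable def diamondNorm {d : ℕ}
    (F : Matrix (Fin d) (Fin d) ℂ → Matrix (Fin d) (Fin d) ℂ) : ℝ :=
  sSup { r | ∃ ρ : Matrix (Fin d × Fin d) (Fin d × Fin d) ℂ, IsState ρ ∧
    r = traceNorm (extendMap F ρ) }

/-- The contraction coefficient (`W₁ → W₁` norm) of a map on `n`-qudit operators. -/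
noncomputable def W1toW1 {d n : ℕ} (Φ : Mat d n → Mat d n) : ℝ :=
  sSup { r | ∃ X : Mat d n, X.IsHermitian ∧ X.trace = 0 ∧ W1 X ≤ 1 ∧ r = W1 (Φ X) }

/-- The von Neumann entropy `S(ρ) = -Tr[ρ ln ρ]` (natural logarithm). -/
noncomputable def vnEntropy {ι : Type} [Fintype ι] [DecidableEq ι] (ρ : Matrix ι ι ℂ) : ℝ :=
  if h : ρ.IsHermitian then -∑ i, h.eigenvalues i * Real.log (h.eigenvalues i) else 0

/-- The logarithm of a self-adjoint matrix, via the spectral decomposition. -/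
noncomputable def matLog {ι : Type} [Fintype ι] [DecidableEq ι] (ρ : Matrix ι ι ℂ) :
    Matrix ι ι ℂ :=
  if h : ρ.IsHermitian then
    (h.eigenvectorUnitary : Matrix ι ι ℂ) *
      Matrix.diagonal (fun i => (Real.log (h.eigenvalues i) : ℂ)) *
      (star (h.eigenvectorUnitary : Matrix ι ι ℂ))
  else 0

/-- The quantum relative entropy `S(ρ‖σ) = Tr[ρ (ln ρ - ln σ)]`. -/
noncomputable def relEntropy {ι : Type} [Fintype ι] [DecidableEq ι]
    (ρ σ : Matrix ι ι ℂ) : ℝ :=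
  ((ρ * (matLog ρ - matLog σ)).trace).re

/-- The Hamming distance between two configurations. -/
def hamming {d n : ℕ} (x y : Cfg d n) : ℕ :=
  (Finset.univ.filter (fun i => x i ≠ y i)).card

/-- Probability distributions on a finite set. -/
def IsProb {α : Type} [Fintype α] (p : α → ℝ) : Prop :=
  (∀ x, 0 ≤ p x) ∧ ∑ x, p x = 1

/-- Couplings of two probability distributions. -/
def IsCoupling {α : Type} [Fintype α] (π : α × α → ℝ) (p q : α → ℝ) : Prop :=
  IsProb π ∧ (∀ x, ∑ y, π (x, y) = p x) ∧ (∀ y, ∑ x, π (x, y) = q y)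

/-- The classical Wasserstein distance of order 1 with respect to the Hamming distance. -/
noncomputable def classicalW1 {d n : ℕ} (p q : Cfg d n → ℝ) : ℝ :=
  sInf { c | ∃ π : Cfg d n × Cfg d n → ℝ, IsCoupling π p q ∧
    c = ∑ x : Cfg d n, ∑ y : Cfg d n, (hamming x y : ℝ) * π (x, y) }

/-- The Lipschitz constant of a function on `[d]^n` with respect to the Hamming distance. -/
noncomputable def classicalLip {d n : ℕ} (f : Cfg d n → ℝ) : ℝ :=
  sSup { r | ∃ x y : Cfg d n, x ≠ y ∧ r = |f x - f y| / (hamming x y : ℝ) }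


section TraceNorm
variable {ι : Type} [Fintype ι] [DecidableEq ι]

lemma psd_diag_nonneg {M : Matrix ι ι ℂ} (hM : M.PosSemidef) (i : ι) : 0 ≤ M i i := by
  exact hM.diag_nonneg

lemma psd_trace_re_nonneg {M : Matrix ι ι ℂ} (hM : M.PosSemidef) : 0 ≤ M.trace.re := by
  rw [Matrix.trace]
  rw [Complex.re_sum]
  exact Finset.sum_nonneg fun i _ => (Complex.le_def.mp (psd_diag_nonneg hM i)).1

lemma traceNorm_nonneg (A : Matrix ι ι ℂ) : 0 ≤ traceNorm A := by
  rw [traceNorm, Matrix.trace_mul_cycle,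
    Matrix.mem_unitaryGroup_iff'.mp (Matrix.posSemidef_conjTranspose_mul_self A).1.eigenvectorUnitary.2,
    Matrix.one_mul, Matrix.trace_diagonal, Complex.re_sum]
  exact Finset.sum_nonneg fun i _ => by simp [Real.sqrt_nonneg]

open scoped MatrixOrder in
lemma psd_sq_inj {P Q : Matrix ι ι ℂ} (hP : P.PosSemidef) (hQ : Q.PosSemidef)
    (h : P ^ 2 = Q ^ 2) : P = Q :=
  (CFC.sq_eq_sq_iff P Q hP.nonneg hQ.nonneg).mp h

open scoped MatrixOrder in
lemma psd_eq_conjTranspose_mul_self {A : Matrix ι ι ℂ} (hA : A.PosSemidef) :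
    ∃ P : Matrix ι ι ℂ, A = P.conjTranspose * P := by
  have ha : 0 ≤ A := hA.nonneg
  refine ⟨CFC.sqrt A, ?_⟩
  have h1 : IsSelfAdjoint (CFC.sqrt A) := IsSelfAdjoint.of_nonneg (CFC.sqrt_nonneg A)
  rw [← Matrix.star_eq_conjTranspose, h1.star_eq, CFC.sqrt_mul_sqrt_self A]

/-- `U g(D) U⋆` functional calculus for a Hermitian matrix. -/
noncomputable def hermFun {A : Matrix ι ι ℂ} (hA : A.IsHermitian) (g : ℝ → ℝ) : Matrix ι ι ℂ :=
  (hA.eigenvectorUnitary : Matrix ι ι ℂ) *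
    Matrix.diagonal (fun i => (g (hA.eigenvalues i) : ℂ)) *
    star (hA.eigenvectorUnitary : Matrix ι ι ℂ)

lemma hermFun_posSemidef {A : Matrix ι ι ℂ} (hA : A.IsHermitian) {g : ℝ → ℝ}
    (hg : ∀ x, 0 ≤ g x) : (hermFun hA g).PosSemidef := by
  have hd : (Matrix.diagonal (fun i => (g (hA.eigenvalues i) : ℂ))).PosSemidef :=
    Matrix.posSemidef_diagonal_iff.mpr fun i => by
      simpa using Complex.zero_le_real.mpr (hg _)
  rw [hermFun, Matrix.star_eq_conjTranspose]
  exact hd.mul_mul_conjTranspose_same (hA.eigenvectorUnitary : Matrix ι ι ℂ)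

lemma star_mul_self_unitary {A : Matrix ι ι ℂ} (hA : A.IsHermitian) :
    star (hA.eigenvectorUnitary : Matrix ι ι ℂ) * (hA.eigenvectorUnitary : Matrix ι ι ℂ) = 1 := by
  exact Matrix.mem_unitaryGroup_iff'.mp hA.eigenvectorUnitary.2

lemma hermFun_trace {A : Matrix ι ι ℂ} (hA : A.IsHermitian) (g : ℝ → ℝ) :
    (hermFun hA g).trace = ∑ i, (g (hA.eigenvalues i) : ℂ) := by
  rw [hermFun, Matrix.trace_mul_cycle, star_mul_self_unitary hA, Matrix.one_mul,
    Matrix.trace_diagonal]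

lemma hermFun_mul {A : Matrix ι ι ℂ} (hA : A.IsHermitian) (g g' : ℝ → ℝ) :
    hermFun hA g * hermFun hA g' = hermFun hA (fun x => g x * g' x) := by
  rw [hermFun, hermFun, hermFun]
  simp only [Matrix.mul_assoc]
  rw [show star (hA.eigenvectorUnitary : Matrix ι ι ℂ) * ((hA.eigenvectorUnitary : Matrix ι ι ℂ) *
      (Matrix.diagonal (fun i => (g' (hA.eigenvalues i) : ℂ)) * star (hA.eigenvectorUnitary : Matrix ι ι ℂ)))
      = Matrix.diagonal (fun i => (g' (hA.eigenvalues i) : ℂ)) * star (hA.eigenvectorUnitary : Matrix ι ι ℂ) from by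
    rw [← Matrix.mul_assoc, ← Matrix.mul_assoc, star_mul_self_unitary hA, Matrix.one_mul]]
  rw [← Matrix.mul_assoc (Matrix.diagonal _), Matrix.diagonal_mul_diagonal]
  push_cast
  rfl

lemma hermFun_id {A : Matrix ι ι ℂ} (hA : A.IsHermitian) : hermFun hA id = A := by
  rw [hermFun]
  exact (hA.spectral_theorem).symm

lemma hermFun_sub {A : Matrix ι ι ℂ} (hA : A.IsHermitian) (g g' : ℝ → ℝ) :
    hermFun hA g - hermFun hA g' = hermFun hA (fun x => g x - g' x) := by
  rw [hermFun, hermFun, hermFun, ← Matrix.sub_mul, ← Matrix.mul_sub, Matrix.diagonal_sub]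
  push_cast
  rfl

lemma hermFun_id_mul_id {A : Matrix ι ι ℂ} (hA : A.IsHermitian) :
    A * A = hermFun hA (fun x => x * x) := by
  conv_lhs => rw [← hermFun_id hA]
  rw [hermFun_mul]
  rfl

lemma traceNorm_herm {A : Matrix ι ι ℂ} (hA : A.IsHermitian) :
    traceNorm A = ∑ i, |hA.eigenvalues i| := by
  have hS : (hermFun hA (fun x => |x|)).PosSemidef := hermFun_posSemidef hA fun x => abs_nonneg x
  have hsq : (hermFun hA (fun x => |x|)) ^ 2 = A.conjTranspose * A := by
    rw [pow_two, hermFun_mul, show A.conjTranspose = A from hA.eq, hermFun_id_mul_id hA]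
    exact congrArg (hermFun hA) (funext fun x => abs_mul_abs_self x)
  have hB := Matrix.posSemidef_conjTranspose_mul_self A
  have hT : (hermFun hB.1 Real.sqrt).PosSemidef := hermFun_posSemidef hB.1 fun x => Real.sqrt_nonneg x
  have hsq2 : (hermFun hB.1 Real.sqrt) ^ 2 = A.conjTranspose * A := by
    rw [pow_two, hermFun_mul]
    refine Eq.trans ?_ (hermFun_id hB.1)
    simp only [hermFun]
    congr 3
    funext i
    simp only [id, Real.mul_self_sqrt (hB.eigenvalues_nonneg i)]
  have key := psd_sq_inj hS hT (hsq.trans hsq2.symm)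
  rw [show traceNorm A = (hermFun hB.1 Real.sqrt).trace.re from rfl, ← key, hermFun_trace,
    Complex.re_sum]
  simp

/-- The key trace-norm bound: if a Hermitian `A` equals `B - C` with `B, C` PSD, then
`‖A‖₁ ≤ Re Tr B + Re Tr C`. -/
lemma traceNorm_le_of_sub {A B C : Matrix ι ι ℂ} (hA : A.IsHermitian)
    (hB : B.PosSemidef) (hC : C.PosSemidef) (h : A = B - C) :
    traceNorm A ≤ B.trace.re + C.trace.re := by
  set U : Matrix ι ι ℂ := (hA.eigenvectorUnitary : Matrix ι ι ℂ) with hU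
  have hBU : (star U * B * U).PosSemidef := by
    simpa [Matrix.star_eq_conjTranspose] using hB.conjTranspose_mul_mul_same U
  have hCU : (star U * C * U).PosSemidef := by
    simpa [Matrix.star_eq_conjTranspose] using hC.conjTranspose_mul_mul_same U
  have hdiag : star U * A * U = Matrix.diagonal (RCLike.ofReal ∘ hA.eigenvalues) :=
    by rw [hU]; simpa using hA.conjStarAlgAut_star_eigenvectorUnitary
  have hsplit : star U * A * U = star U * B * U - star U * C * U := by
    rw [h, Matrix.mul_sub, Matrix.sub_mul]
  -- eigenvalue entry identities
  have hentry : ∀ i, (hA.eigenvalues i : ℂ) = (star U * B * U) i i - (star U * C * U) i i := by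
    intro i
    have := congrFun (congrFun (hsplit.symm.trans hdiag) i) i
    rw [Matrix.sub_apply] at this
    simpa [Matrix.diagonal_apply_eq] using this.symm
  have habs : ∀ i, |hA.eigenvalues i| ≤ ((star U * B * U) i i).re + ((star U * C * U) i i).re := by
    intro i
    have hb := psd_diag_nonneg hBU i
    have hc := psd_diag_nonneg hCU i
    have hbre := (Complex.le_def.mp hb).1
    have hcre := (Complex.le_def.mp hc).1
    have h1 : hA.eigenvalues i = ((star U * B * U) i i).re - ((star U * C * U) i i).re := by
      have := congrArg Complex.re (hentry i)
      simpa [Complex.sub_re] using this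
    rw [h1]
    calc |((star U * B * U) i i).re - ((star U * C * U) i i).re|
        ≤ |((star U * B * U) i i).re| + |((star U * C * U) i i).re| := abs_sub _ _
      _ = _ := by rw [abs_of_nonneg hbre, abs_of_nonneg hcre]
  have htr : ∀ M : Matrix ι ι ℂ, (star U * M * U).trace = M.trace := by
    intro M
    rw [Matrix.trace_mul_cycle,
      Matrix.mem_unitaryGroup_iff.mp hA.eigenvectorUnitary.2, Matrix.one_mul]
  calc traceNorm A = ∑ i, |hA.eigenvalues i| := traceNorm_herm hA
    _ ≤ ∑ i, (((star U * B * U) i i).re + ((star U * C * U) i i).re) :=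
        Finset.sum_le_sum fun i _ => habs i
    _ = (star U * B * U).trace.re + (star U * C * U).trace.re := by
        rw [Finset.sum_add_distrib, Matrix.trace, Matrix.trace, Complex.re_sum, Complex.re_sum]
        rfl
    _ = B.trace.re + C.trace.re := by rw [htr, htr]

/-- Jordan decomposition with trace-norm control. -/
lemma exists_jordan {A : Matrix ι ι ℂ} (hA : A.IsHermitian) :
    ∃ P N : Matrix ι ι ℂ, P.PosSemidef ∧ N.PosSemidef ∧ A = P - N ∧
      P.trace.re + N.trace.re = traceNorm A := by
  refine ⟨hermFun hA (fun x => max x 0), hermFun hA (fun x => max (-x) 0),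
    hermFun_posSemidef hA (fun x => le_max_right _ _),
    hermFun_posSemidef hA (fun x => le_max_right _ _), ?_, ?_⟩
  · rw [hermFun_sub hA]
    conv_lhs => rw [← hermFun_id hA]
    exact congrArg (hermFun hA) (funext fun x => (max_zero_sub_max_neg_zero_eq_self x).symm)
  · rw [hermFun_trace, hermFun_trace, traceNorm_herm hA, Complex.re_sum, Complex.re_sum]
    rw [← Finset.sum_add_distrib]
    refine Finset.sum_congr rfl fun i _ => ?_
    simp [max_zero_add_max_neg_zero_eq_abs_self]


end TraceNorm
section Combinatorics
variable {d m n : ℕ}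

lemma append_comp_castAdd (a : Cfg d m) (k : Cfg d n) :
    (fun i => Fin.append a k (Fin.castAdd n i)) = a :=
  funext fun i => Fin.append_left a k i

lemma append_comp_natAdd (a : Cfg d m) (k : Cfg d n) :
    (fun j => Fin.append a k (Fin.natAdd m j)) = k :=
  funext fun j => Fin.append_right a k j

def appendEquiv (d m n : ℕ) : Cfg d m × Cfg d n ≃ Cfg d (m + n) where
  toFun p := Fin.append p.1 p.2
  invFun c := (fun i => c (Fin.castAdd n i), fun j => c (Fin.natAdd m j))
  left_inv p := by
    obtain ⟨a, k⟩ := p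
    exact Prod.ext (append_comp_castAdd a k) (append_comp_natAdd a k)
  right_inv c := Fin.append_castAdd_natAdd

lemma sum_cfg_split {M : Type*} [AddCommMonoid M] (f : Cfg d (m + n) → M) :
    ∑ c, f c = ∑ a : Cfg d m, ∑ k : Cfg d n, f (Fin.append a k) := by
  rw [← Equiv.sum_comp (appendEquiv d m n) f, Fintype.sum_prod_type]
  rfl

lemma trace_ptraceLast (X : Mat d (m + n)) : (ptraceLast X).trace = X.trace := by
  rw [Matrix.trace, Matrix.trace]
  rw [show ∑ c, X.diag c = ∑ a : Cfg d m, ∑ k : Cfg d n, X (Fin.append a k) (Fin.append a k) from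
    sum_cfg_split _]
  rfl

lemma trace_ptraceFirst (X : Mat d (m + n)) : (ptraceFirst X).trace = X.trace := by
  rw [Matrix.trace, Matrix.trace]
  rw [show ∑ c, X.diag c = ∑ a : Cfg d m, ∑ k : Cfg d n, X (Fin.append a k) (Fin.append a k) from
    sum_cfg_split _]
  rw [Finset.sum_comm]
  rfl

lemma trace_tensorMN (A : Mat d m) (B : Mat d n) :
    (tensorMN A B).trace = A.trace * B.trace := by
  rw [Matrix.trace, Matrix.trace, Matrix.trace]
  rw [show ∑ c, (tensorMN A B).diag c
      = ∑ a : Cfg d m, ∑ k : Cfg d n, (tensorMN A B) (Fin.append a k) (Fin.append a k) from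
    sum_cfg_split _]
  rw [Finset.sum_mul_sum]
  refine Finset.sum_congr rfl fun a _ => Finset.sum_congr rfl fun k _ => ?_
  show tensorMN A B (Fin.append a k) (Fin.append a k) = _
  rw [tensorMN, append_comp_castAdd, append_comp_natAdd]
  rfl

lemma ptraceLast_isHermitian {X : Mat d (m + n)} (hX : X.IsHermitian) :
    (ptraceLast X).IsHermitian := by
  refine Matrix.ext fun a b => ?_
  rw [Matrix.conjTranspose_apply, ptraceLast, ptraceLast, star_sum]
  exact Finset.sum_congr rfl fun k _ => hX.apply _ _

lemma ptraceFirst_isHermitian {X : Mat d (m + n)} (hX : X.IsHermitian) :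
    (ptraceFirst X).IsHermitian := by
  refine Matrix.ext fun a b => ?_
  rw [Matrix.conjTranspose_apply, ptraceFirst, ptraceFirst, star_sum]
  exact Finset.sum_congr rfl fun k _ => hX.apply _ _

lemma tensorMN_isHermitian {A : Mat d m} {B : Mat d n} (hA : A.IsHermitian)
    (hB : B.IsHermitian) : (tensorMN A B).IsHermitian := by
  refine Matrix.ext fun a b => ?_
  rw [Matrix.conjTranspose_apply, tensorMN, tensorMN, star_mul', hA.apply, hB.apply]

def extv {d m n : ℕ} (x : Cfg d m → ℂ) (k : Cfg d n) : Cfg d (m + n) → ℂ :=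
  fun c => if (fun j => c (Fin.natAdd m j)) = k then x (fun i => c (Fin.castAdd n i)) else 0

lemma extv_append (x : Cfg d m → ℂ) (k k1 : Cfg d n) (a : Cfg d m) :
    extv x k (Fin.append a k1) = if k1 = k then x a else 0 := by
  rw [extv, append_comp_natAdd, append_comp_castAdd]

lemma ext_quad (X : Mat d (m + n)) (x : Cfg d m → ℂ) (k : Cfg d n) :
    dotProduct (star (extv x k)) (Matrix.mulVec X (extv x k))
      = ∑ a : Cfg d m, ∑ b : Cfg d m,
          star (x a) * (X (Fin.append a k) (Fin.append b k) * x b) := by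
  simp only [dotProduct, Matrix.mulVec, Pi.star_apply, Finset.mul_sum]
  rw [sum_cfg_split (fun c => ∑ c', star (extv x k c) * (X c c' * extv x k c'))]
  refine Finset.sum_congr rfl fun a _ => ?_
  rw [show (∑ k1 : Cfg d n, ∑ c', star (extv x k (Fin.append a k1)) * (X (Fin.append a k1) c' * extv x k c'))
      = ∑ k1 : Cfg d n, ∑ b : Cfg d m, ∑ k2 : Cfg d n,
          star (extv x k (Fin.append a k1)) * (X (Fin.append a k1) (Fin.append b k2) * extv x k (Fin.append b k2))
    from Finset.sum_congr rfl fun k1 _ => by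
      rw [sum_cfg_split (fun c' => star (extv x k (Fin.append a k1)) * (X (Fin.append a k1) c' * extv x k c'))]]
  simp [extv_append, apply_ite, ite_mul, mul_ite, Finset.sum_ite_eq, Finset.sum_ite_eq']

lemma ptraceLast_posSemidef {X : Mat d (m + n)} (hX : X.PosSemidef) :
    (ptraceLast X).PosSemidef := by
  refine Matrix.PosSemidef.of_dotProduct_mulVec_nonneg (ptraceLast_isHermitian hX.1) fun x => ?_
  have key : dotProduct (star x) (Matrix.mulVec (ptraceLast X) x)
      = ∑ k : Cfg d n, dotProduct (star (extv x k)) (Matrix.mulVec X (extv x k)) := by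
    simp only [ext_quad]
    rw [Finset.sum_comm]
    simp only [dotProduct, Matrix.mulVec, Pi.star_apply, Finset.mul_sum, ptraceLast]
    refine Finset.sum_congr rfl fun a _ => ?_
    rw [Finset.sum_comm]
    refine Finset.sum_congr rfl fun b _ => ?_
    rw [Finset.sum_mul, Finset.mul_sum]
  rw [key]
  exact Finset.sum_nonneg fun k _ => hX.dotProduct_mulVec_nonneg _


def extw {d m n : ℕ} (x : Cfg d n → ℂ) (k : Cfg d m) : Cfg d (m + n) → ℂ :=
  fun c => if (fun i => c (Fin.castAdd n i)) = k then x (fun j => c (Fin.natAdd m j)) else 0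

lemma extw_append (x : Cfg d n → ℂ) (k k1 : Cfg d m) (a : Cfg d n) :
    extw x k (Fin.append k1 a) = if k1 = k then x a else 0 := by
  rw [extw, append_comp_natAdd, append_comp_castAdd]

lemma ext_quad' (X : Mat d (m + n)) (x : Cfg d n → ℂ) (k : Cfg d m) :
    dotProduct (star (extw x k)) (Matrix.mulVec X (extw x k))
      = ∑ a : Cfg d n, ∑ b : Cfg d n,
          star (x a) * (X (Fin.append k a) (Fin.append k b) * x b) := by
  simp only [dotProduct, Matrix.mulVec, Pi.star_apply, Finset.mul_sum]
  rw [sum_cfg_split (fun c => ∑ c', star (extw x k c) * (X c c' * extw x k c'))]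
  rw [show (∑ k1 : Cfg d m, ∑ a : Cfg d n, ∑ c',
        star (extw x k (Fin.append k1 a)) * (X (Fin.append k1 a) c' * extw x k c'))
      = ∑ k1 : Cfg d m, ∑ a : Cfg d n, ∑ k2 : Cfg d m, ∑ b : Cfg d n,
          star (extw x k (Fin.append k1 a)) * (X (Fin.append k1 a) (Fin.append k2 b) * extw x k (Fin.append k2 b))
    from Finset.sum_congr rfl fun k1 _ => Finset.sum_congr rfl fun a _ => by
      rw [sum_cfg_split (fun c' => star (extw x k (Fin.append k1 a)) * (X (Fin.append k1 a) c' * extw x k c'))]]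
  simp [extw_append, apply_ite, ite_mul, mul_ite, Finset.sum_ite_eq, Finset.sum_ite_eq',
    Finset.sum_ite_irrel]

lemma ptraceFirst_posSemidef {X : Mat d (m + n)} (hX : X.PosSemidef) :
    (ptraceFirst X).PosSemidef := by
  refine Matrix.PosSemidef.of_dotProduct_mulVec_nonneg (ptraceFirst_isHermitian hX.1) fun x => ?_
  have key : dotProduct (star x) (Matrix.mulVec (ptraceFirst X) x)
      = ∑ k : Cfg d m, dotProduct (star (extw x k)) (Matrix.mulVec X (extw x k)) := by
    simp only [ext_quad']
    rw [Finset.sum_comm]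
    simp only [dotProduct, Matrix.mulVec, Pi.star_apply, Finset.mul_sum, ptraceFirst]
    refine Finset.sum_congr rfl fun a _ => ?_
    rw [Finset.sum_comm]
    refine Finset.sum_congr rfl fun b _ => ?_
    rw [Finset.sum_mul, Finset.mul_sum]
  rw [key]
  exact Finset.sum_nonneg fun k _ => hX.dotProduct_mulVec_nonneg _

lemma tensorMN_conjTranspose (A : Mat d m) (B : Mat d n) :
    (tensorMN A B).conjTranspose = tensorMN A.conjTranspose B.conjTranspose := by
  refine Matrix.ext fun a b => ?_
  rw [Matrix.conjTranspose_apply, tensorMN, tensorMN, star_mul']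
  rfl

lemma tensorMN_mul (A C : Mat d m) (B D : Mat d n) :
    tensorMN A B * tensorMN C D = tensorMN (A * C) (B * D) := by
  refine Matrix.ext fun a b => ?_
  rw [Matrix.mul_apply, tensorMN, Matrix.mul_apply, Matrix.mul_apply, Finset.sum_mul_sum]
  rw [sum_cfg_split (fun c => tensorMN A B a c * tensorMN C D c b)]
  refine Finset.sum_congr rfl fun p _ => Finset.sum_congr rfl fun q _ => ?_
  rw [tensorMN, tensorMN, append_comp_castAdd, append_comp_natAdd]
  ring

lemma tensorMN_posSemidef {A : Mat d m} {B : Mat d n} (hA : A.PosSemidef)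
    (hB : B.PosSemidef) : (tensorMN A B).PosSemidef := by
  obtain ⟨P, hP⟩ := psd_eq_conjTranspose_mul_self hA
  obtain ⟨Q, hQ⟩ := psd_eq_conjTranspose_mul_self hB
  have : tensorMN A B = (tensorMN P Q).conjTranspose * tensorMN P Q := by
    rw [hP, hQ, tensorMN_conjTranspose, tensorMN_mul]
  rw [this]
  exact Matrix.posSemidef_conjTranspose_mul_self _

lemma ptraceLast_sub (X Y : Mat d (m + n)) :
    ptraceLast (X - Y) = ptraceLast X - ptraceLast Y := by
  funext a b
  simp [ptraceLast, Finset.sum_sub_distrib]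

lemma ptraceFirst_sub (X Y : Mat d (m + n)) :
    ptraceFirst (X - Y) = ptraceFirst X - ptraceFirst Y := by
  funext a b
  simp [ptraceFirst, Finset.sum_sub_distrib]

lemma ptraceLast_sum {α : Type*} (s : Finset α) (f : α → Mat d (m + n)) :
    ptraceLast (∑ i ∈ s, f i) = ∑ i ∈ s, ptraceLast (f i) := by
  funext a b
  simp [ptraceLast, Matrix.sum_apply]
  exact Finset.sum_comm

lemma ptraceFirst_sum {α : Type*} (s : Finset α) (f : α → Mat d (m + n)) :
    ptraceFirst (∑ i ∈ s, f i) = ∑ i ∈ s, ptraceFirst (f i) := by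
  funext a b
  simp [ptraceFirst, Matrix.sum_apply]
  exact Finset.sum_comm

lemma tensorMN_sub_left (A C : Mat d m) (B : Mat d n) :
    tensorMN (A - C) B = tensorMN A B - tensorMN C B := by
  funext a b
  simp [tensorMN, sub_mul]

lemma tensorMN_sub_right (A : Mat d m) (B D : Mat d n) :
    tensorMN A (B - D) = tensorMN A B - tensorMN A D := by
  funext a b
  simp [tensorMN, mul_sub]

lemma tensorMN_sum_left {α : Type*} (s : Finset α) (f : α → Mat d m) (B : Mat d n) :
    tensorMN (∑ i ∈ s, f i) B = ∑ i ∈ s, tensorMN (f i) B := by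
  funext a b
  simp [tensorMN, Matrix.sum_apply, Finset.sum_mul]

lemma tensorMN_sum_right {α : Type*} (s : Finset α) (A : Mat d m) (f : α → Mat d n) :
    tensorMN A (∑ i ∈ s, f i) = ∑ i ∈ s, tensorMN A (f i) := by
  funext a b
  simp [tensorMN, Matrix.sum_apply, Finset.mul_sum]


lemma natAdd_ne_castAdd (j : Fin n) (i : Fin m) : Fin.natAdd m j ≠ Fin.castAdd n i := by
  intro h
  have := congrArg Fin.val h
  simp only [Fin.coe_natAdd, Fin.coe_castAdd] at this
  have hi := i.isLt
  omega

lemma castAdd_ne_castAdd {j i : Fin m} (h : j ≠ i) :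
    Fin.castAdd n j ≠ Fin.castAdd n i := by
  intro hc
  exact h (Fin.ext (by simpa using congrArg Fin.val hc))

lemma natAdd_ne_natAdd {j i : Fin n} (h : j ≠ i) :
    Fin.natAdd m j ≠ Fin.natAdd m i := by
  intro hc
  have := congrArg Fin.val hc
  simp only [Fin.coe_natAdd] at this
  exact h (Fin.ext (by omega))

def glueL {d m n : ℕ} (i : Fin m) (a : {j : Fin m // j ≠ i} → Fin d) (k : Cfg d n) :
    {l : Fin (m + n) // l ≠ Fin.castAdd n i} → Fin d :=
  fun l => if h : ((l : Fin (m + n)) : ℕ) < m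
    then a ⟨⟨(l : Fin (m + n)), h⟩, fun hc => l.2 (Fin.ext (by simpa using congrArg Fin.val hc))⟩
    else k ⟨((l : Fin (m + n)) : ℕ) - m, by have := (l : Fin (m + n)).isLt; omega⟩

def glueR {d m n : ℕ} (j : Fin n) (a : Cfg d m) (c : {t : Fin n // t ≠ j} → Fin d) :
    {l : Fin (m + n) // l ≠ Fin.natAdd m j} → Fin d :=
  fun l => if h : ((l : Fin (m + n)) : ℕ) < m
    then a ⟨(l : Fin (m + n)), h⟩
    else c ⟨⟨((l : Fin (m + n)) : ℕ) - m, by have := (l : Fin (m + n)).isLt; omega⟩,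
      fun hc => l.2 (Fin.ext (by
        have := congrArg Fin.val hc
        simp only [Fin.coe_natAdd] at this ⊢
        omega))⟩

lemma append_ins_left (i : Fin m) (c : {j : Fin m // j ≠ i} → Fin d) (s : Fin d) (k : Cfg d n) :
    Fin.append (ins i c s) k = ins (Fin.castAdd n i) (glueL i c k) s := by
  funext l
  refine Fin.addCases (fun j => ?_) (fun j => ?_) l
  · rw [Fin.append_left]
    by_cases hj : j = i
    · subst hj
      rw [ins, dif_pos rfl, ins, dif_pos rfl]
    · rw [ins, dif_neg hj, ins, dif_neg (castAdd_ne_castAdd hj), glueL,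
        dif_pos (show ((Fin.castAdd n j : Fin (m+n)) : ℕ) < m from j.isLt)]
      exact congrArg c (Subtype.ext (Fin.ext rfl))
  · rw [Fin.append_right, ins, dif_neg (natAdd_ne_castAdd j i)]
    rw [glueL, dif_neg (show ¬ ((Fin.natAdd m j : Fin (m+n)) : ℕ) < m by simp)]
    exact congrArg k (Fin.ext (by simp))

lemma append_ins_right (j : Fin n) (a : Cfg d m) (c : {t : Fin n // t ≠ j} → Fin d) (s : Fin d) :
    Fin.append a (ins j c s) = ins (Fin.natAdd m j) (glueR j a c) s := by
  funext l
  refine Fin.addCases (fun i => ?_) (fun t => ?_) l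
  · rw [Fin.append_left, ins, dif_neg (Ne.symm (natAdd_ne_castAdd j i)), glueR,
      dif_pos (show ((Fin.castAdd n i : Fin (m+n)) : ℕ) < m from i.isLt)]
    exact congrArg a (Fin.ext rfl)
  · rw [Fin.append_right]
    by_cases ht : t = j
    · subst ht
      rw [ins, dif_pos rfl, ins, dif_pos rfl]
    · rw [ins, dif_neg ht, ins, dif_neg (natAdd_ne_natAdd ht), glueR,
        dif_neg (show ¬ ((Fin.natAdd m t : Fin (m+n)) : ℕ) < m by simp)]
      refine congrArg c (Subtype.ext (Fin.ext (by simp)))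

lemma funSplitAt_symm_ins (i : Fin n) (s : Fin d) (a : {j : Fin n // j ≠ i} → Fin d) :
    (Equiv.funSplitAt i (Fin d)).symm (s, a) = ins i a s := by
  funext j
  by_cases h : j = i
  · subst h
    simp [Equiv.funSplitAt, Equiv.piSplitAt, ins]
  · simp [Equiv.funSplitAt, Equiv.piSplitAt, ins, h]

lemma sum_split_at {M : Type*} [AddCommMonoid M] (i : Fin n) (f : Cfg d n → M) :
    ∑ k, f k = ∑ s : Fin d, ∑ a : {j : Fin n // j ≠ i} → Fin d, f (ins i a s) := by
  rw [← Equiv.sum_comp (Equiv.funSplitAt i (Fin d)).symm f, Fintype.sum_prod_type]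
  exact Finset.sum_congr rfl fun s _ => Finset.sum_congr rfl fun a _ =>
    congrArg f (funSplitAt_symm_ins i s a)

lemma glueL_eta (i : Fin m) (a : {l : Fin (m + n) // l ≠ Fin.castAdd n i} → Fin d) :
    glueL i (fun j => a ⟨Fin.castAdd n j.1, castAdd_ne_castAdd j.2⟩)
      (fun t => a ⟨Fin.natAdd m t, natAdd_ne_castAdd t i⟩) = a := by
  funext l
  rw [glueL]
  by_cases h : ((l : Fin (m + n)) : ℕ) < m
  · rw [dif_pos h]
    exact congrArg a (Subtype.ext (Fin.ext rfl))
  · rw [dif_neg h]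
    refine congrArg a (Subtype.ext (Fin.ext (by
      simp only [Fin.coe_natAdd]
      have := (l : Fin (m + n)).isLt
      omega)))

lemma glueR_eta (j : Fin n) (a : {l : Fin (m + n) // l ≠ Fin.natAdd m j} → Fin d) :
    glueR j (fun i => a ⟨Fin.castAdd n i, Ne.symm (natAdd_ne_castAdd j i)⟩)
      (fun t => a ⟨Fin.natAdd m t.1, natAdd_ne_natAdd t.2⟩) = a := by
  funext l
  rw [glueR]
  by_cases h : ((l : Fin (m + n)) : ℕ) < m
  · rw [dif_pos h]
    exact congrArg a (Subtype.ext (Fin.ext rfl))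
  · rw [dif_neg h]
    refine congrArg a (Subtype.ext (Fin.ext (by
      simp only [Fin.coe_natAdd]
      have := (l : Fin (m + n)).isLt
      omega)))

lemma ins_castAdd_eq_append (i : Fin m) (a : {l : Fin (m + n) // l ≠ Fin.castAdd n i} → Fin d)
    (s : Fin d) :
    ins (Fin.castAdd n i) a s
      = Fin.append (ins i (fun j => a ⟨Fin.castAdd n j.1, castAdd_ne_castAdd j.2⟩) s)
          (fun t => a ⟨Fin.natAdd m t, natAdd_ne_castAdd t i⟩) := by
  rw [append_ins_left, glueL_eta]

lemma ins_natAdd_eq_append (j : Fin n) (a : {l : Fin (m + n) // l ≠ Fin.natAdd m j} → Fin d)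
    (s : Fin d) :
    ins (Fin.natAdd m j) a s
      = Fin.append (fun i => a ⟨Fin.castAdd n i, Ne.symm (natAdd_ne_castAdd j i)⟩)
          (ins j (fun t => a ⟨Fin.natAdd m t.1, natAdd_ne_natAdd t.2⟩) s) := by
  rw [append_ins_right, glueR_eta]

lemma ptrace_castAdd_tensor {A : Mat d m} (B : Mat d n) {i : Fin m}
    (h : ptrace i A = 0) : ptrace (Fin.castAdd n i) (tensorMN A B) = 0 := by
  funext a b
  rw [ptrace, Matrix.zero_apply]
  have hsum : ∀ s, tensorMN A B (ins (Fin.castAdd n i) a s) (ins (Fin.castAdd n i) b s)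
      = A (ins i (fun j => a ⟨Fin.castAdd n j.1, castAdd_ne_castAdd j.2⟩) s)
          (ins i (fun j => b ⟨Fin.castAdd n j.1, castAdd_ne_castAdd j.2⟩) s)
        * (B (fun t => a ⟨Fin.natAdd m t, natAdd_ne_castAdd t i⟩)
            (fun t => b ⟨Fin.natAdd m t, natAdd_ne_castAdd t i⟩)) := by
    intro s
    rw [ins_castAdd_eq_append, ins_castAdd_eq_append, tensorMN,
      append_comp_castAdd, append_comp_natAdd, append_comp_castAdd, append_comp_natAdd]
  rw [Finset.sum_congr rfl fun s _ => hsum s, ← Finset.sum_mul]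
  have h0 := congrFun (congrFun h (fun j => a ⟨Fin.castAdd n j.1, castAdd_ne_castAdd j.2⟩))
    (fun j => b ⟨Fin.castAdd n j.1, castAdd_ne_castAdd j.2⟩)
  rw [ptrace, Matrix.zero_apply] at h0
  rw [h0, zero_mul]

lemma ptrace_natAdd_tensor (A : Mat d m) {B : Mat d n} {j : Fin n}
    (h : ptrace j B = 0) : ptrace (Fin.natAdd m j) (tensorMN A B) = 0 := by
  funext a b
  rw [ptrace, Matrix.zero_apply]
  have hsum : ∀ s, tensorMN A B (ins (Fin.natAdd m j) a s) (ins (Fin.natAdd m j) b s)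
      = A (fun i => a ⟨Fin.castAdd n i, Ne.symm (natAdd_ne_castAdd j i)⟩)
          (fun i => b ⟨Fin.castAdd n i, Ne.symm (natAdd_ne_castAdd j i)⟩)
        * (B (ins j (fun t => a ⟨Fin.natAdd m t.1, natAdd_ne_natAdd t.2⟩) s)
            (ins j (fun t => b ⟨Fin.natAdd m t.1, natAdd_ne_natAdd t.2⟩) s)) := by
    intro s
    rw [ins_natAdd_eq_append, ins_natAdd_eq_append, tensorMN,
      append_comp_castAdd, append_comp_natAdd, append_comp_castAdd, append_comp_natAdd]
  rw [Finset.sum_congr rfl fun s _ => hsum s, ← Finset.mul_sum]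
  have h0 := congrFun (congrFun h (fun t => a ⟨Fin.natAdd m t.1, natAdd_ne_natAdd t.2⟩))
    (fun t => b ⟨Fin.natAdd m t.1, natAdd_ne_natAdd t.2⟩)
  rw [ptrace, Matrix.zero_apply] at h0
  rw [h0, mul_zero]

lemma ptraceLast_eq_zero {Y : Mat d (m + n)} {j : Fin n}
    (h : ptrace (Fin.natAdd m j) Y = 0) : ptraceLast Y = 0 := by
  funext a b
  rw [ptraceLast, Matrix.zero_apply]
  rw [sum_split_at j (fun k => Y (Fin.append a k) (Fin.append b k)), Finset.sum_comm]
  refine Finset.sum_eq_zero fun c _ => ?_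
  have h0 := congrFun (congrFun h (glueR j a c)) (glueR j b c)
  rw [ptrace, Matrix.zero_apply] at h0
  rw [← h0]
  exact Finset.sum_congr rfl fun s _ => by rw [append_ins_right, append_ins_right]

lemma ptraceFirst_eq_zero {Y : Mat d (m + n)} {i : Fin m}
    (h : ptrace (Fin.castAdd n i) Y = 0) : ptraceFirst Y = 0 := by
  funext a b
  rw [ptraceFirst, Matrix.zero_apply]
  rw [sum_split_at i (fun k => Y (Fin.append k a) (Fin.append k b)), Finset.sum_comm]
  refine Finset.sum_eq_zero fun c _ => ?_
  have h0 := congrFun (congrFun h (glueL i c a)) (glueL i c b)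
  rw [ptrace, Matrix.zero_apply] at h0
  rw [← h0]
  exact Finset.sum_congr rfl fun s _ => by rw [append_ins_left, append_ins_left]

lemma ptrace_ptraceLast {Y : Mat d (m + n)} {i : Fin m}
    (h : ptrace (Fin.castAdd n i) Y = 0) : ptrace i (ptraceLast Y) = 0 := by
  funext a b
  rw [ptrace, Matrix.zero_apply]
  have : ∀ s : Fin d, ptraceLast Y (ins i a s) (ins i b s)
      = ∑ k : Cfg d n, Y (ins (Fin.castAdd n i) (glueL i a k) s) (ins (Fin.castAdd n i) (glueL i b k) s) := by
    intro s
    exact Finset.sum_congr rfl fun k _ => by rw [← append_ins_left, ← append_ins_left]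
  rw [Finset.sum_congr rfl fun s _ => this s, Finset.sum_comm]
  refine Finset.sum_eq_zero fun k _ => ?_
  have h0 := congrFun (congrFun h (glueL i a k)) (glueL i b k)
  rw [ptrace, Matrix.zero_apply] at h0
  exact h0

lemma ptrace_ptraceFirst {Y : Mat d (m + n)} {j : Fin n}
    (h : ptrace (Fin.natAdd m j) Y = 0) : ptrace j (ptraceFirst Y) = 0 := by
  funext a b
  rw [ptrace, Matrix.zero_apply]
  have : ∀ s : Fin d, ptraceFirst Y (ins j a s) (ins j b s)
      = ∑ k : Cfg d m, Y (ins (Fin.natAdd m j) (glueR j k a) s) (ins (Fin.natAdd m j) (glueR j k b) s) := by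
    intro s
    exact Finset.sum_congr rfl fun k _ => by rw [← append_ins_right, ← append_ins_right]
  rw [Finset.sum_congr rfl fun s _ => this s, Finset.sum_comm]
  refine Finset.sum_eq_zero fun k _ => ?_
  have h0 := congrFun (congrFun h (glueR j k a)) (glueR j k b)
  rw [ptrace, Matrix.zero_apply] at h0
  exact h0


end Combinatorics
section Tele
variable {d n : ℕ}

/-- Telescoping interpolant: `(I/d)^{⊗k} ⊗ Tr_{≤k} X`. -/
noncomputable def tele (X : Mat d n) (k : ℕ) : Mat d n := fun a b =>
  (∏ j : Fin n, if (j : ℕ) < k then (if a j = b j then (d : ℂ)⁻¹ else 0) else 1) *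
  ∑ c : Cfg d n, (∏ j : Fin n, if (j : ℕ) < k then (1 : ℂ) else if c j = a j then 1 else 0) *
    X c (fun j => if (j : ℕ) < k then c j else b j)

lemma prod_ind (c a : Cfg d n) :
    (∏ j : Fin n, if c j = a j then (1 : ℂ) else 0) = if c = a then 1 else 0 := by
  by_cases h : c = a
  · subst h
    simp
  · rw [if_neg h]
    obtain ⟨j, hj⟩ := Function.ne_iff.mp h
    exact Finset.prod_eq_zero (Finset.mem_univ j) (if_neg hj)

lemma tele_zero (X : Mat d n) : tele X 0 = X := by
  funext a b
  simp only [tele, Nat.not_lt_zero, if_false]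
  rw [Finset.prod_const_one, one_mul]
  rw [Finset.sum_congr rfl fun c _ => by rw [prod_ind c a]]
  simp

lemma tele_top {X : Mat d n} (h0 : X.trace = 0) : tele X n = 0 := by
  funext a b
  simp only [tele]
  have h1 : ∀ j : Fin n, ((j : ℕ) < n) := fun j => j.isLt
  rw [show (∑ c : Cfg d n, (∏ j : Fin n, if (j : ℕ) < n then (1:ℂ) else if c j = a j then 1 else 0) *
      X c (fun j => if (j : ℕ) < n then c j else b j)) = ∑ c : Cfg d n, X c c from
    Finset.sum_congr rfl fun c _ => by
      rw [Finset.prod_congr rfl fun j _ => if_pos (h1 j), Finset.prod_const_one, one_mul]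
      exact congrArg (X c) (funext fun j => if_pos (h1 j))]
  rw [show (∑ c : Cfg d n, X c c) = X.trace from rfl, h0, mul_zero]
  rfl

def teleSwap (k : ℕ) (a b : Cfg d n) : Equiv.Perm (Cfg d n) :=
  Function.Involutive.toPerm
    (fun c j => if (j : ℕ) < k then c j else Equiv.swap (a j) (b j) (c j))
    (fun c => funext fun j => by
      by_cases h : (j : ℕ) < k
      · simp [h]
      · simp [h, Equiv.swap_apply_self])

lemma teleSwap_apply (k : ℕ) (a b c : Cfg d n) (j : Fin n) :
    teleSwap k a b c j = if (j : ℕ) < k then c j else Equiv.swap (a j) (b j) (c j) := rfl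

lemma tele_isHermitian {X : Mat d n} (hX : X.IsHermitian) (k : ℕ) :
    (tele X k).IsHermitian := by
  refine Matrix.ext fun a b => ?_
  rw [Matrix.conjTranspose_apply, tele, tele, star_mul']
  congr 1
  · -- prefactor
    rw [show star (∏ j : Fin n, if (j : ℕ) < k then (if b j = a j then (d : ℂ)⁻¹ else 0) else 1)
        = ∏ j : Fin n, star (if (j : ℕ) < k then (if b j = a j then (d : ℂ)⁻¹ else 0) else 1) from
      by rw [← starRingEnd_apply, map_prod]; rfl]
    refine Finset.prod_congr rfl fun j _ => ?_
    by_cases h1 : (j : ℕ) < k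
    · by_cases h2 : b j = a j
      · rw [if_pos h1, if_pos h1, if_pos h2, if_pos h2.symm, star_inv₀, star_natCast]
      · rw [if_pos h1, if_pos h1, if_neg h2, if_neg (Ne.symm h2), star_zero]
    · rw [if_neg h1, if_neg h1, star_one]
  · -- the sum
    rw [show star (∑ c : Cfg d n,
          (∏ j : Fin n, if (j : ℕ) < k then (1:ℂ) else if c j = b j then 1 else 0) *
          X c (fun j => if (j : ℕ) < k then c j else a j))
        = ∑ c : Cfg d n,
          (∏ j : Fin n, if (j : ℕ) < k then (1:ℂ) else if c j = b j then 1 else 0) *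
          star (X c (fun j => if (j : ℕ) < k then c j else a j)) from by
      rw [star_sum]
      refine Finset.sum_congr rfl fun c _ => ?_
      rw [star_mul']
      congr 1
      rw [← starRingEnd_apply, map_prod]
      refine Finset.prod_congr rfl fun j _ => ?_
      split_ifs <;> simp]
    refine Fintype.sum_equiv (teleSwap k b a) _ _ fun c => ?_
    by_cases hc : ∀ j : Fin n, ¬ ((j : ℕ) < k) → c j = b j
    · have hswap : ∀ j : Fin n, ¬ ((j : ℕ) < k) → teleSwap k b a c j = a j := by
        intro j h
        rw [teleSwap_apply, if_neg h, hc j h, Equiv.swap_apply_left]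
      have h1 : (∏ j : Fin n, if (j : ℕ) < k then (1:ℂ) else if c j = b j then 1 else 0) = 1 :=
        Finset.prod_eq_one fun j _ => by
          by_cases h : (j : ℕ) < k
          · rw [if_pos h]
          · rw [if_neg h, if_pos (hc j h)]
      have h2 : (∏ j : Fin n, if (j : ℕ) < k then (1:ℂ)
          else if teleSwap k b a c j = a j then 1 else 0) = 1 :=
        Finset.prod_eq_one fun j _ => by
          by_cases h : (j : ℕ) < k
          · rw [if_pos h]
          · rw [if_neg h, if_pos (hswap j h)]
      rw [h1, h2, one_mul, one_mul]
      have h3 : (fun j : Fin n => if (j : ℕ) < k then teleSwap k b a c j else b j) = c := by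
        funext j
        by_cases h : (j : ℕ) < k
        · rw [if_pos h, teleSwap_apply, if_pos h]
        · rw [if_neg h]
          exact (hc j h).symm
      have h4 : teleSwap k b a c = fun j : Fin n => if (j : ℕ) < k then c j else a j := by
        funext j
        by_cases h : (j : ℕ) < k
        · rw [teleSwap_apply, if_pos h, if_pos h]
        · rw [if_neg h]
          exact hswap j h
      rw [h3, h4]
      exact hX.apply _ _
    · push_neg at hc
      obtain ⟨j, hjk, hjb⟩ := hc
      have hjk' : ¬ ((j : ℕ) < k) := not_lt.mpr hjk
      have h1 : (∏ j : Fin n, if (j : ℕ) < k then (1:ℂ) else if c j = b j then 1 else 0) = 0 :=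
        Finset.prod_eq_zero (Finset.mem_univ j) (by rw [if_neg hjk', if_neg hjb])
      have hne : teleSwap k b a c j ≠ a j := by
        rw [teleSwap_apply, if_neg hjk']
        intro hcon
        rcases eq_or_ne (c j) (a j) with h' | h'
        · rw [h', Equiv.swap_apply_right] at hcon
          exact hjb (by rw [h', ← hcon])
        · rw [Equiv.swap_apply_of_ne_of_ne hjb h'] at hcon
          exact h' hcon
      have h2 : (∏ j : Fin n, if (j : ℕ) < k then (1:ℂ)
          else if teleSwap k b a c j = a j then 1 else 0) = 0 :=
        Finset.prod_eq_zero (Finset.mem_univ j) (by rw [if_neg hjk', if_neg hne])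
      rw [h1, h2, zero_mul, zero_mul]


lemma ins_apply_ne {i : Fin n} (x : {j : Fin n // j ≠ i} → Fin d) (s : Fin d)
    {j : Fin n} (h : j ≠ i) : ins i x s j = x ⟨j, h⟩ := dif_neg h

lemma ins_apply_self {i : Fin n} (x : {j : Fin n // j ≠ i} → Fin d) (s : Fin d) :
    ins i x s i = s := dif_pos rfl

lemma tele_ptrace (hd : d ≠ 0) {X : Mat d n} (i : Fin n) :
    ptrace i (tele X (i : ℕ)) = ptrace i (tele X ((i : ℕ) + 1)) := by
  have hz : 0 < d := Nat.pos_of_ne_zero hd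
  set z : Fin d := ⟨0, hz⟩ with hzdef
  funext a b
  rw [ptrace, ptrace]
  have hik : ¬ ((i : ℕ) < (i : ℕ)) := lt_irrefl _
  have hlt_iff : ∀ j : Fin n, j ≠ i → (((j : ℕ) < (i : ℕ) + 1) ↔ ((j : ℕ) < (i : ℕ))) := by
    intro j hj
    have : (j : ℕ) ≠ (i : ℕ) := fun hc => hj (Fin.ext hc)
    omega
  -- common abbreviations (spelled out)
  have key1 : ∀ s : Fin d, tele X (i : ℕ) (ins i a s) (ins i b s)
      = (∏ j ∈ Finset.univ.erase i,
            if (j : ℕ) < (i : ℕ) then (if ins i a z j = ins i b z j then (d : ℂ)⁻¹ else 0) else 1)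
        * ∑ c : Cfg d n, (if c i = s then (1 : ℂ) else 0) *
            ((∏ j ∈ Finset.univ.erase i,
                if (j : ℕ) < (i : ℕ) then (1 : ℂ) else if c j = ins i a z j then 1 else 0)
              * X c (fun j : Fin n => if (j : ℕ) < (i : ℕ) + 1 then c j else ins i b z j)) := by
    intro s
    rw [tele]
    congr 1
    · rw [← Finset.mul_prod_erase Finset.univ _ (Finset.mem_univ i), if_neg hik, one_mul]
      refine Finset.prod_congr rfl fun j hj => ?_
      have hji : j ≠ i := Finset.ne_of_mem_erase hj
      rw [ins_apply_ne a s hji, ins_apply_ne b s hji, ins_apply_ne a z hji, ins_apply_ne b z hji]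
    · refine Finset.sum_congr rfl fun c _ => ?_
      by_cases hcs : c i = s
      · rw [if_pos hcs, one_mul]
        congr 1
        · rw [← Finset.mul_prod_erase Finset.univ _ (Finset.mem_univ i), if_neg hik,
            ins_apply_self a s, if_pos hcs, one_mul]
          refine Finset.prod_congr rfl fun j hj => ?_
          have hji : j ≠ i := Finset.ne_of_mem_erase hj
          rw [ins_apply_ne a s hji, ins_apply_ne a z hji]
        · refine congrArg (X c) (funext fun j => ?_)
          by_cases hj : (j : ℕ) < (i : ℕ)
          · rw [if_pos hj, if_pos (by omega)]
          · by_cases hji : j = i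
            · subst hji
              rw [if_neg hik, if_pos (by omega), ins_apply_self b s, hcs]
            · rw [if_neg hj, if_neg (by rw [hlt_iff j hji]; exact hj),
                ins_apply_ne b s hji, ins_apply_ne b z hji]
      · rw [if_neg hcs, zero_mul]
        refine mul_eq_zero_of_left ?_ _
        refine Finset.prod_eq_zero (Finset.mem_univ i) ?_
        rw [if_neg hik, ins_apply_self a s, if_neg hcs]
  have key2 : ∀ s : Fin d, tele X ((i : ℕ) + 1) (ins i a s) (ins i b s)
      = (d : ℂ)⁻¹ * ((∏ j ∈ Finset.univ.erase i,
            if (j : ℕ) < (i : ℕ) then (if ins i a z j = ins i b z j then (d : ℂ)⁻¹ else 0) else 1)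
        * ∑ c : Cfg d n,
            ((∏ j ∈ Finset.univ.erase i,
                if (j : ℕ) < (i : ℕ) then (1 : ℂ) else if c j = ins i a z j then 1 else 0)
              * X c (fun j : Fin n => if (j : ℕ) < (i : ℕ) + 1 then c j else ins i b z j))) := by
    intro s
    rw [tele, ← mul_assoc]
    congr 1
    · rw [← Finset.mul_prod_erase Finset.univ _ (Finset.mem_univ i),
        if_pos (Nat.lt_succ_self _), ins_apply_self a s, ins_apply_self b s, if_pos rfl]
      congr 1
      refine Finset.prod_congr rfl fun j hj => ?_
      have hji : j ≠ i := Finset.ne_of_mem_erase hj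
      by_cases hj2 : (j : ℕ) < (i : ℕ)
      · rw [if_pos (by omega : (j : ℕ) < (i : ℕ) + 1), if_pos hj2,
          ins_apply_ne a s hji, ins_apply_ne b s hji, ins_apply_ne a z hji, ins_apply_ne b z hji]
      · rw [if_neg (fun hc => hj2 ((hlt_iff j hji).mp hc)), if_neg hj2]
    · refine Finset.sum_congr rfl fun c _ => ?_
      congr 1
      · rw [← Finset.mul_prod_erase Finset.univ _ (Finset.mem_univ i),
          if_pos (Nat.lt_succ_self _), one_mul]
        refine Finset.prod_congr rfl fun j hj => ?_
        have hji : j ≠ i := Finset.ne_of_mem_erase hj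
        by_cases hj2 : (j : ℕ) < (i : ℕ)
        · rw [if_pos (by omega : (j : ℕ) < (i : ℕ) + 1), if_pos hj2]
        · rw [if_neg (fun hc => hj2 ((hlt_iff j hji).mp hc)), if_neg hj2,
            ins_apply_ne a s hji, ins_apply_ne a z hji]
      · refine congrArg (X c) (funext fun j => ?_)
        by_cases hj : (j : ℕ) < (i : ℕ) + 1
        · rw [if_pos hj, if_pos hj]
        · have hji : j ≠ i := fun hc => hj (by subst hc; omega)
          rw [if_neg hj, if_neg hj, ins_apply_ne b s hji, ins_apply_ne b z hji]
  rw [Finset.sum_congr rfl fun s _ => key1 s, Finset.sum_congr rfl fun s _ => key2 s]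
  rw [← Finset.mul_sum, Finset.sum_const, Finset.card_univ, Fintype.card_fin, nsmul_eq_mul]
  rw [← mul_assoc, mul_inv_cancel₀ (by exact_mod_cast hd), one_mul]
  congr 1
  rw [Finset.sum_comm]
  refine Finset.sum_congr rfl fun c _ => ?_
  rw [show (∑ s : Fin d, (if c i = s then (1:ℂ) else 0) *
        ((∏ j ∈ Finset.univ.erase i,
            if (j : ℕ) < (i : ℕ) then (1 : ℂ) else if c j = ins i a z j then 1 else 0)
          * X c (fun j : Fin n => if (j : ℕ) < (i : ℕ) + 1 then c j else ins i b z j)))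
      = ∑ s : Fin d, (if c i = s then
        ((∏ j ∈ Finset.univ.erase i,
            if (j : ℕ) < (i : ℕ) then (1 : ℂ) else if c j = ins i a z j then 1 else 0)
          * X c (fun j : Fin n => if (j : ℕ) < (i : ℕ) + 1 then c j else ins i b z j)) else 0) from
    Finset.sum_congr rfl fun s _ => by rw [ite_mul, one_mul, zero_mul]]
  rw [Finset.sum_ite_eq Finset.univ (c i) _, if_pos (Finset.mem_univ _)]


end Tele

section Glue
variable {d m n : ℕ}

lemma traceNorm_map_le {ι κ : Type} [Fintype ι] [DecidableEq ι] [Fintype κ] [DecidableEq κ]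
    (f : Matrix ι ι ℂ → Matrix κ κ ℂ)
    (hsub : ∀ X Y, f (X - Y) = f X - f Y)
    (hpsd : ∀ X, X.PosSemidef → (f X).PosSemidef)
    (htr : ∀ X, X.PosSemidef → (f X).trace = X.trace)
    {A : Matrix ι ι ℂ} (hA : A.IsHermitian) : traceNorm (f A) ≤ traceNorm A := by
  obtain ⟨P, N, hP, hN, hPN, htrace⟩ := exists_jordan hA
  have hfA : f A = f P - f N := by rw [hPN, hsub]
  have hherm : (f A).IsHermitian := by
    rw [hfA]
    exact ((hpsd P hP).1).sub ((hpsd N hN).1)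
  have hb := traceNorm_le_of_sub hherm (hpsd P hP) (hpsd N hN) hfA
  rw [htr P hP, htr N hN] at hb
  linarith

lemma traceNorm_ptraceLast_le {X : Mat d (m + n)} (hX : X.IsHermitian) :
    traceNorm (ptraceLast X) ≤ traceNorm X :=
  traceNorm_map_le ptraceLast ptraceLast_sub (fun _ h => ptraceLast_posSemidef h)
    (fun Y _ => trace_ptraceLast Y) hX

lemma traceNorm_ptraceFirst_le {X : Mat d (m + n)} (hX : X.IsHermitian) :
    traceNorm (ptraceFirst X) ≤ traceNorm X :=
  traceNorm_map_le ptraceFirst ptraceFirst_sub (fun _ h => ptraceFirst_posSemidef h)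
    (fun Y _ => trace_ptraceFirst Y) hX

lemma traceNorm_tensor_state_right {A : Mat d m} (hA : A.IsHermitian) {ρ : Mat d n}
    (hρ : IsState ρ) : traceNorm (tensorMN A ρ) ≤ traceNorm A :=
  traceNorm_map_le (fun X => tensorMN X ρ) (fun X Y => tensorMN_sub_left X Y ρ)
    (fun _ h => tensorMN_posSemidef h hρ.1)
    (fun X _ => by rw [trace_tensorMN, hρ.2, mul_one]) hA

lemma traceNorm_tensor_state_left {σ : Mat d m} (hσ : IsState σ) {B : Mat d n}
    (hB : B.IsHermitian) : traceNorm (tensorMN σ B) ≤ traceNorm B :=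
  traceNorm_map_le (fun X => tensorMN σ X) (fun X Y => tensorMN_sub_right σ X Y)
    (fun _ h => tensorMN_posSemidef hσ.1 h)
    (fun X _ => by rw [trace_tensorMN, hσ.2, one_mul]) hB

lemma ptraceLast_tensor (A : Mat d m) (B : Mat d n) :
    ptraceLast (tensorMN A B) = B.trace • A := by
  funext a b
  rw [ptraceLast, Matrix.smul_apply]
  rw [Finset.sum_congr rfl fun k _ => show tensorMN A B (Fin.append a k) (Fin.append b k)
      = A a b * B k k from by rw [tensorMN, append_comp_castAdd, append_comp_natAdd,
        append_comp_castAdd, append_comp_natAdd]]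
  rw [← Finset.mul_sum, mul_comm]
  rfl

lemma ptraceFirst_tensor (A : Mat d m) (B : Mat d n) :
    ptraceFirst (tensorMN A B) = A.trace • B := by
  funext a b
  rw [ptraceFirst, Matrix.smul_apply]
  rw [Finset.sum_congr rfl fun k _ => show tensorMN A B (Fin.append k a) (Fin.append k b)
      = A k k * B a b from by rw [tensorMN, append_comp_castAdd, append_comp_natAdd,
        append_comp_castAdd, append_comp_natAdd]]
  rw [← Finset.sum_mul]
  rfl

lemma ptrace_sub {d n : ℕ} (i : Fin n) (A B : Mat d n) :
    ptrace i (A - B) = ptrace i A - ptrace i B := by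
  funext a b
  simp [ptrace, Matrix.sub_apply, Finset.sum_sub_distrib]

lemma tele_telescope {d n : ℕ} (X : Mat d n) :
    ∑ i : Fin n, (tele X (i : ℕ) - tele X ((i : ℕ) + 1)) = tele X 0 - tele X n := by
  rw [Fin.sum_univ_eq_sum_range (fun k => tele X k - tele X (k + 1)) n]
  exact Finset.sum_range_sub' (fun k => tele X k) n

lemma mem_W1Set_nonneg {X : Mat d n} {r : ℝ} (h : r ∈ W1Set X) : 0 ≤ r := by
  obtain ⟨Y, _, _, _, hval⟩ := h
  rw [hval]
  exact mul_nonneg (by norm_num)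
    (Finset.sum_nonneg fun i _ => traceNorm_nonneg _)

lemma W1Set_bddBelow (X : Mat d n) : BddBelow (W1Set X) :=
  ⟨0, fun _ hr => mem_W1Set_nonneg hr⟩

lemma W1Set_nonempty (hd : d ≠ 0) {X : Mat d n} (hX : X.IsHermitian) (h0 : X.trace = 0) :
    (W1Set X).Nonempty := by
  refine ⟨(1 / 2) * ∑ i : Fin n, traceNorm (tele X (i : ℕ) - tele X ((i : ℕ) + 1)),
    ⟨fun i => tele X (i : ℕ) - tele X ((i : ℕ) + 1),
      fun i => (tele_isHermitian hX _).sub (tele_isHermitian hX _),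
      fun i => by rw [ptrace_sub, tele_ptrace hd i, sub_self], ?_, rfl⟩⟩
  rw [tele_telescope, tele_zero, tele_top h0, sub_zero]

end Glue

theorem stmt2 {d m n : ℕ} (hd : 2 ≤ d) (hm : 1 ≤ m) (hn : 1 ≤ n)
    (ρ' σ' : Mat d m) (ρ'' σ'' : Mat d n)
    (hρ' : IsState ρ') (hσ' : IsState σ') (hρ'' : IsState ρ'') (hσ'' : IsState σ'') :
    W1 (tensorMN ρ' ρ'' - tensorMN σ' σ'') = W1 (ρ' - σ') + W1 (ρ'' - σ'') := by
  have hd0 : d ≠ 0 := by omega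
  have hΔ'h : (ρ' - σ').IsHermitian := hρ'.1.1.sub hσ'.1.1
  have hΔ''h : (ρ'' - σ'').IsHermitian := hρ''.1.1.sub hσ''.1.1
  have hΔ't : (ρ' - σ').trace = 0 := by rw [Matrix.trace_sub, hρ'.2, hσ'.2, sub_self]
  have hΔ''t : (ρ'' - σ'').trace = 0 := by rw [Matrix.trace_sub, hρ''.2, hσ''.2, sub_self]
  have hAne := W1Set_nonempty hd0 hΔ'h hΔ't
  have hBne := W1Set_nonempty hd0 hΔ''h hΔ''t
  -- upper bound construction
  have key1 : ∀ x ∈ W1Set (ρ' - σ'), ∀ y ∈ W1Set (ρ'' - σ''),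
      ∃ c ∈ W1Set (tensorMN ρ' ρ'' - tensorMN σ' σ''), c ≤ x + y := by
    intro x hx y hy
    obtain ⟨Y', hH', hP', hsum', hval'⟩ := hx
    obtain ⟨Y'', hH'', hP'', hsum'', hval''⟩ := hy
    set Y : Fin (m + n) → Mat d (m + n) :=
      Fin.addCases (fun i => tensorMN (Y' i) ρ'') (fun j => tensorMN σ' (Y'' j)) with hY
    have hYl : ∀ i : Fin m, Y (Fin.castAdd n i) = tensorMN (Y' i) ρ'' := fun i => by
      rw [hY]; exact Fin.addCases_left i
    have hYr : ∀ j : Fin n, Y (Fin.natAdd m j) = tensorMN σ' (Y'' j) := fun j => by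
      rw [hY]; exact Fin.addCases_right j
    refine ⟨(1 / 2) * ∑ l, traceNorm (Y l), ⟨Y, ?_, ?_, ?_, rfl⟩, ?_⟩
    · intro l
      refine Fin.addCases (fun i => ?_) (fun j => ?_) l
      · rw [hYl]; exact tensorMN_isHermitian (hH' i) hρ''.1.1
      · rw [hYr]; exact tensorMN_isHermitian hσ'.1.1 (hH'' j)
    · intro l
      refine Fin.addCases (fun i => ?_) (fun j => ?_) l
      · rw [hYl]; exact ptrace_castAdd_tensor ρ'' (hP' i)
      · rw [hYr]; exact ptrace_natAdd_tensor σ' (hP'' j)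
    · rw [Fin.sum_univ_add]
      rw [Finset.sum_congr rfl fun i _ => hYl i, Finset.sum_congr rfl fun j _ => hYr j]
      rw [← tensorMN_sum_left, ← tensorMN_sum_right, ← hsum', ← hsum'']
      rw [tensorMN_sub_left, tensorMN_sub_right]
      abel
    · rw [Fin.sum_univ_add]
      rw [Finset.sum_congr rfl fun i _ => congrArg traceNorm (hYl i),
        Finset.sum_congr rfl fun j _ => congrArg traceNorm (hYr j)]
      have h1 : ∑ i : Fin m, traceNorm (tensorMN (Y' i) ρ'') ≤ ∑ i : Fin m, traceNorm (Y' i) :=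
        Finset.sum_le_sum fun i _ => traceNorm_tensor_state_right (hH' i) hρ''
      have h2 : ∑ j : Fin n, traceNorm (tensorMN σ' (Y'' j)) ≤ ∑ j : Fin n, traceNorm (Y'' j) :=
        Finset.sum_le_sum fun j _ => traceNorm_tensor_state_left hσ' (hH'' j)
      rw [hval', hval'']
      linarith
  -- lower bound construction
  have key2 : ∀ c ∈ W1Set (tensorMN ρ' ρ'' - tensorMN σ' σ''),
      ∃ x ∈ W1Set (ρ' - σ'), ∃ y ∈ W1Set (ρ'' - σ''), x + y ≤ c := by
    intro c hc
    obtain ⟨Y, hH, hP, hsum, hval⟩ := hc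
    refine ⟨(1 / 2) * ∑ i : Fin m, traceNorm (ptraceLast (Y (Fin.castAdd n i))),
      ⟨fun i => ptraceLast (Y (Fin.castAdd n i)),
        fun i => ptraceLast_isHermitian (hH _),
        fun i => ptrace_ptraceLast (hP _), ?_, rfl⟩,
      (1 / 2) * ∑ j : Fin n, traceNorm (ptraceFirst (Y (Fin.natAdd m j))),
      ⟨fun j => ptraceFirst (Y (Fin.natAdd m j)),
        fun j => ptraceFirst_isHermitian (hH _),
        fun j => ptrace_ptraceFirst (hP _), ?_, rfl⟩, ?_⟩
    · have h1 : ptraceLast (tensorMN ρ' ρ'' - tensorMN σ' σ'') = ρ' - σ' := by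
        rw [ptraceLast_sub, ptraceLast_tensor, ptraceLast_tensor, hρ''.2, hσ''.2,
          one_smul, one_smul]
      rw [← h1, hsum, ptraceLast_sum, Fin.sum_univ_add]
      rw [Finset.sum_congr rfl fun j (_ : j ∈ Finset.univ) =>
        ptraceLast_eq_zero (hP (Fin.natAdd m j))]
      rw [Finset.sum_const, smul_zero, add_zero]
    · have h1 : ptraceFirst (tensorMN ρ' ρ'' - tensorMN σ' σ'') = ρ'' - σ'' := by
        rw [ptraceFirst_sub, ptraceFirst_tensor, ptraceFirst_tensor, hρ'.2, hσ'.2,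
          one_smul, one_smul]
      rw [← h1, hsum, ptraceFirst_sum, Fin.sum_univ_add]
      rw [Finset.sum_congr rfl fun i (_ : i ∈ Finset.univ) =>
        ptraceFirst_eq_zero (hP (Fin.castAdd n i))]
      rw [Finset.sum_const, smul_zero, zero_add]
    · have h1 : ∑ i : Fin m, traceNorm (ptraceLast (Y (Fin.castAdd n i)))
          ≤ ∑ i : Fin m, traceNorm (Y (Fin.castAdd n i)) :=
        Finset.sum_le_sum fun i _ => traceNorm_ptraceLast_le (hH _)
      have h2 : ∑ j : Fin n, traceNorm (ptraceFirst (Y (Fin.natAdd m j)))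
          ≤ ∑ j : Fin n, traceNorm (Y (Fin.natAdd m j)) :=
        Finset.sum_le_sum fun j _ => traceNorm_ptraceFirst_le (hH _)
      rw [hval, Fin.sum_univ_add]
      linarith
  have hCne : (W1Set (tensorMN ρ' ρ'' - tensorMN σ' σ'')).Nonempty := by
    obtain ⟨x, hx⟩ := hAne
    obtain ⟨y, hy⟩ := hBne
    obtain ⟨c, hc, _⟩ := key1 x hx y hy
    exact ⟨c, hc⟩
  rw [W1, W1, W1]
  refine le_antisymm ?_ ?_
  · have h1 : ∀ x ∈ W1Set (ρ' - σ'),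
        sInf (W1Set (tensorMN ρ' ρ'' - tensorMN σ' σ'')) - x ≤ sInf (W1Set (ρ'' - σ'')) := by
      intro x hx
      refine le_csInf hBne fun y hy => ?_
      obtain ⟨c, hc, hcle⟩ := key1 x hx y hy
      have := csInf_le (W1Set_bddBelow _) hc
      linarith
    have h2 : sInf (W1Set (tensorMN ρ' ρ'' - tensorMN σ' σ'')) - sInf (W1Set (ρ'' - σ''))
        ≤ sInf (W1Set (ρ' - σ')) :=
      le_csInf hAne fun x hx => by linarith [h1 x hx]
    linarith
  · refine le_csInf hCne fun c hc => ?_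
    obtain ⟨x, hx, y, hy, hxy⟩ := key2 c hc
    have hx' := csInf_le (W1Set_bddBelow _) hx
    have hy' := csInf_le (W1Set_bddBelow _) hy
    linarith


end QW1
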